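/- Let Λ be a lattice in ℂ² and let L be a ℂ-linear automorphism of ℂ² with L(Λ) = Λ whose characteristic polynomial is (X − α)(X − β) with complex numbers satisfying |α| < 1 < |β| (a loxodromic automorphism). Let L̄ denote the induced group automorphism of the torus A = ℂ²/Λ. Then: (1) for every t ∈ A the affine map x ↦ L̄(x) + t of A has a fixed point; (2) the set of periodic points of L̄ (points x with L̄ᵏ(x) = x for some k ≥ 1) is exactly the torsion subgroup of A. -/

import Mathlib

open Polynomial in
theorem aux_bij (L : (Fin 2 → ℂ) ≃ₗ[ℂ] (Fin 2 → ℂ)) (α β : ℂ)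
    (hα : ‖α‖ < 1) (hβ : 1 < ‖β‖)
    (hchar : LinearMap.charpoly (L.toLinearMap) = (X - C α) * (X - C β))
    (n : ℕ) (hn : 1 ≤ n) :
    Function.Bijective (L.toLinearMap ^ n - 1 : Module.End ℂ (Fin 2 → ℂ)) := by
  set f := L.toLinearMap
  have hroot : ∀ γ : ℂ, ‖γ‖ ≠ 1 → ¬ (X - C γ ∣ (X ^ n - 1 : ℂ[X])) := by
    intro γ hγ hdvd
    rw [Polynomial.dvd_iff_isRoot] at hdvd
    simp only [IsRoot, eval_sub, eval_pow, eval_X, eval_one, sub_eq_zero] at hdvd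
    have habs : ‖γ‖ ^ n = 1 := by
      have := congrArg norm hdvd
      rwa [norm_pow, norm_one] at this
    rcases hγ.lt_or_gt with h | h
    · exact absurd habs (ne_of_lt (pow_lt_one₀ (norm_nonneg γ) h (by omega)))
    · exact absurd habs (ne_of_gt (one_lt_pow₀ h (by omega)))
  have hcop : IsCoprime ((X - C α) * (X - C β)) (X ^ n - 1 : ℂ[X]) := by
    refine IsCoprime.mul_left ?_ ?_
    · exact (Polynomial.irreducible_X_sub_C α).coprime_iff_not_dvd.mpr
        (hroot α (by exact ne_of_lt hα))
    · exact (Polynomial.irreducible_X_sub_C β).coprime_iff_not_dvd.mpr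
        (hroot β (by exact (ne_of_lt hβ).symm))
  obtain ⟨u, v, huv⟩ := hcop
  have hCH : aeval (R := ℂ) f ((X - C α) * (X - C β)) = 0 := by
    rw [← hchar]; exact LinearMap.aeval_self_charpoly f
  have key : aeval (R := ℂ) f v * aeval (R := ℂ) f (X ^ n - 1) = 1 := by
    have h2 : aeval (R := ℂ) f (u * ((X - C α) * (X - C β)) + v * (X ^ n - 1)) =
        aeval (R := ℂ) f 1 := by
      rw [huv]
    simp only [map_add, map_mul, map_one, hCH, mul_zero, zero_add] at h2
    exact h2
  have haev : aeval (R := ℂ) f (X ^ n - 1 : ℂ[X]) = f ^ n - 1 := by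
    simp [map_sub, map_pow, aeval_X]
  rw [haev] at key
  have hinj : Function.Injective (f ^ n - 1 : Module.End ℂ (Fin 2 → ℂ)) := by
    intro a b hab
    have h1 : (aeval (R := ℂ) f v * (f ^ n - 1)) a = (aeval (R := ℂ) f v * (f ^ n - 1)) b := by
      simp only [Module.End.mul_apply, hab]
    rwa [key, Module.End.one_apply, Module.End.one_apply] at h1
  exact ⟨hinj, (LinearMap.injective_iff_surjective).mp hinj⟩

open Matrix in
theorem loxodromic_torus_automorphism_fixed_and_periodic
    (Λ : AddSubgroup (Fin 2 → ℂ))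
    (hdisc : DiscreteTopology Λ)
    (hspan : Submodule.span ℝ (Λ : Set (Fin 2 → ℂ)) = ⊤)
    (L : (Fin 2 → ℂ) ≃ₗ[ℂ] (Fin 2 → ℂ))
    (hLΛ : ∀ x : Fin 2 → ℂ, x ∈ Λ ↔ L x ∈ Λ)
    (α β : ℂ) (hα : ‖α‖ < 1) (hβ : 1 < ‖β‖)
    (hchar : LinearMap.charpoly (L.toLinearMap) =
      (Polynomial.X - Polynomial.C α) * (Polynomial.X - Polynomial.C β))
    (Lbar : ((Fin 2 → ℂ) ⧸ Λ) → ((Fin 2 → ℂ) ⧸ Λ))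
    (hLbar : ∀ x : Fin 2 → ℂ,
      Lbar (QuotientAddGroup.mk x) = QuotientAddGroup.mk (L x)) :
    (∀ t : (Fin 2 → ℂ) ⧸ Λ, ∃ x, Lbar x + t = x) ∧
    (∀ x : (Fin 2 → ℂ) ⧸ Λ,
      (∃ n : ℕ, 1 ≤ n ∧ Lbar^[n] x = x) ↔ (∃ q : ℕ, 1 ≤ q ∧ q • x = 0)) := by
  classical
  set f := L.toLinearMap with hfdef
  -- powers of L preserve Λ
  have hLmem : ∀ (n : ℕ), ∀ x ∈ Λ, (f ^ n) x ∈ Λ := by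
    intro n
    induction n with
    | zero => intro x hx; simpa using hx
    | succ n ih =>
      intro x hx
      have h : (f ^ (n + 1)) x = (f ^ n) (f x) := by
        rw [pow_succ]; rfl
      rw [h]
      exact ih _ ((hLΛ x).mp hx)
  -- Lbar is injective
  have hinj : Function.Injective Lbar := by
    intro a b hab
    induction a using QuotientAddGroup.induction_on with | H a =>
    induction b using QuotientAddGroup.induction_on with | H b =>
    rw [hLbar, hLbar, QuotientAddGroup.eq] at hab
    rw [QuotientAddGroup.eq]
    have : L (-a + b) ∈ Λ := by rwa [map_add, map_neg]
    exact (hLΛ (-a + b)).mpr this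
  -- iterates of Lbar
  have hiter : ∀ (n : ℕ) (y : Fin 2 → ℂ),
      Lbar^[n] (QuotientAddGroup.mk y) = QuotientAddGroup.mk ((f ^ n) y) := by
    intro n y
    induction n with
    | zero => simp
    | succ n ih =>
      rw [Function.iterate_succ_apply', ih, hLbar]
      congr 1
      rw [pow_succ']
      rfl
  -- lattice setup
  let Λℤ : Submodule ℤ (Fin 2 → ℂ) := AddSubgroup.toIntSubmodule Λ
  haveI : DiscreteTopology Λℤ := hdisc
  haveI : IsZLattice ℝ Λℤ := ⟨by rw [AddSubgroup.coe_toIntSubmodule]; exact hspan⟩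
  haveI : Module.Free ℤ Λℤ := ZLattice.module_free ℝ Λℤ
  haveI : Module.Finite ℤ Λℤ := ZLattice.module_finite ℝ Λℤ
  let b := Module.Free.chooseBasis ℤ Λℤ
  let B := b.ofZLatticeBasis ℝ Λℤ
  have h1 : ∀ i, B i = (b i : Fin 2 → ℂ) := fun i => b.ofZLatticeBasis_apply ℝ Λℤ i
  have h2 : ∀ (w : Λℤ) i, B.repr (w : Fin 2 → ℂ) i = ((b.repr w i : ℤ) : ℝ) :=
    fun w i => b.ofZLatticeBasis_repr_apply ℝ Λℤ w i
  constructor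
  · -- part (1)
    intro t
    induction t using QuotientAddGroup.induction_on with | H y =>
    obtain ⟨x, hx⟩ := (aux_bij L α β hα hβ hchar 1 le_rfl).2 (-y)
    have h : f x - x = -y := by
      simpa [hfdef, pow_one, LinearMap.sub_apply] using hx
    have hx' : L x + y = x := by
      have hfx : f x = L x := rfl
      rw [sub_eq_iff_eq_add] at h
      rw [← hfx, h]
      abel
    refine ⟨QuotientAddGroup.mk x, ?_⟩
    rw [hLbar, ← QuotientAddGroup.mk_add, hx']
  · -- part (2)
    intro x
    induction x using QuotientAddGroup.induction_on with | H y =>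
    constructor
    · -- periodic implies torsion
      rintro ⟨n, hn, hfix⟩
      set P : Module.End ℂ (Fin 2 → ℂ) := f ^ n - 1 with hPdef
      have hPbij := aux_bij L α β hα hβ hchar n hn
      have hPapp : ∀ z, P z = (f ^ n) z - z := fun z => rfl
      have hPy : P y ∈ Λ := by
        rw [hiter] at hfix
        rw [QuotientAddGroup.eq] at hfix
        rw [hPapp]
        have h9 := Λ.neg_mem hfix
        rw [neg_add_rev, neg_neg] at h9
        have h10 : (f ^ n) y - y = -y + (f ^ n) y := by abel
        rwa [h10]
      have hmaps : ∀ z ∈ Λℤ, (P.restrictScalars ℤ) z ∈ Λℤ := by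
        intro z hz
        have hz' : z ∈ Λ := hz
        have : P z ∈ Λ := by
          rw [hPapp]
          exact Λ.sub_mem (hLmem n z hz') hz'
        exact this
      let Pℤ : Λℤ →ₗ[ℤ] Λℤ := LinearMap.restrict (P.restrictScalars ℤ) hmaps
      have hPcoe : ∀ z : Λℤ, ((Pℤ z : Λℤ) : Fin 2 → ℂ) = P (z : Fin 2 → ℂ) :=
        fun z => rfl
      let N := LinearMap.toMatrix b b Pℤ
      have hdet : N.det ≠ 0 := by
        intro h0
        obtain ⟨v, hv0, hv⟩ := Matrix.exists_mulVec_eq_zero_iff.mpr h0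
        set z : Λℤ := ∑ i, v i • b i with hz
        have hrz : ⇑(b.repr z) = v := b.repr_sum_self v
        have hPz : ⇑(b.repr (Pℤ z)) = N *ᵥ ⇑(b.repr z) :=
          (LinearMap.toMatrix_mulVec_repr b b Pℤ z).symm
        have hPz0 : Pℤ z = 0 := by
          apply b.repr.injective
          ext i
          have : (N *ᵥ ⇑(b.repr z)) i = 0 := by rw [hrz, hv]; rfl
          rw [map_zero]
          simpa [hPz] using this
        have hz0 : (z : Fin 2 → ℂ) = 0 := by
          have h3 : P (z : Fin 2 → ℂ) = 0 := by rw [← hPcoe, hPz0]; rfl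
          have h4 : P (0 : Fin 2 → ℂ) = 0 := map_zero P
          exact hPbij.1 (h3.trans h4.symm)
        have : z = 0 := Subtype.ext hz0
        apply hv0
        rw [← hrz, this, map_zero]
        rfl
      -- the matrix of P in the real basis B
      have hNmat : LinearMap.toMatrix B B (P.restrictScalars ℝ) =
          N.map (Int.cast : ℤ → ℝ) := by
        ext j i
        rw [LinearMap.toMatrix_apply, Matrix.map_apply]
        have hBi : (P.restrictScalars ℝ) (B i) = ((Pℤ (b i) : Λℤ) : Fin 2 → ℂ) := by
          rw [h1 i, hPcoe]; rfl
        rw [hBi, h2]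
        congr 1
        rw [← LinearMap.toMatrix_apply b b Pℤ]
      -- coordinates of P y are integers
      let w : Λℤ := ⟨P y, hPy⟩
      let m : _ → ℤ := fun j => b.repr w j
      have hwB : ∀ j, B.repr (P y) j = ((m j : ℤ) : ℝ) := fun j => h2 w j
      have hrepr : ⇑(B.repr ((P.restrictScalars ℝ) y)) =
          (N.map (Int.cast : ℤ → ℝ)) *ᵥ ⇑(B.repr y) := by
        rw [← hNmat, LinearMap.toMatrix_mulVec_repr]
      set d : ℤ := N.det with hd
      let k : _ → ℤ := (Matrix.adjugate N) *ᵥ m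
      have hk : ∀ i, (d : ℝ) * B.repr y i = ((k i : ℤ) : ℝ) := by
        intro i
        have hAmul : (Matrix.adjugate (N.map (Int.cast : ℤ → ℝ))) *ᵥ
            ((N.map (Int.cast : ℤ → ℝ)) *ᵥ ⇑(B.repr y)) =
            ((d : ℝ)) • ⇑(B.repr y) := by
          rw [Matrix.mulVec_mulVec, Matrix.adjugate_mul]
          have hdm : ((N.map (Int.cast : ℤ → ℝ)).det) = ((d : ℤ) : ℝ) := by
            exact (RingHom.map_det (Int.castRingHom ℝ) N).symm
          rw [hdm, Matrix.smul_mulVec, Matrix.one_mulVec]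
        have lhs : ((Matrix.adjugate (N.map (Int.cast : ℤ → ℝ))) *ᵥ
            ((N.map (Int.cast : ℤ → ℝ)) *ᵥ ⇑(B.repr y))) i = ((k i : ℤ) : ℝ) := by
          rw [← hrepr]
          have hint : ⇑(B.repr ((P.restrictScalars ℝ) y)) = fun j => ((m j : ℤ) : ℝ) := by
            funext j; exact hwB j
          rw [hint]
          have hcast' : (Matrix.adjugate (N.map (Int.cast : ℤ → ℝ)))
              = (Matrix.adjugate N).map (Int.cast : ℤ → ℝ) := by
            exact (RingHom.map_adjugate (Int.castRingHom ℝ) N).symm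
          rw [hcast']
          exact ((Int.castRingHom ℝ).map_mulVec (Matrix.adjugate N) m i).symm
        rw [← lhs, hAmul]
        rfl
      have hdy : d • y ∈ Λ := by
        have hysum : y = ∑ i, B.repr y i • B i := (B.sum_repr y).symm
        have : d • y = ((∑ i, k i • b i : Λℤ) : Fin 2 → ℂ) := by
          conv_lhs => rw [hysum]
          rw [Finset.smul_sum]
          rw [Submodule.coe_sum]
          refine Finset.sum_congr rfl (fun i _ => ?_)
          rw [SetLike.val_smul, ← h1 i]
          rw [← Int.cast_smul_eq_zsmul ℝ (k i) (B i), ← hk i]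
          rw [← Int.cast_smul_eq_zsmul ℝ d, smul_smul]
        rw [this]
        exact (∑ i, k i • b i : Λℤ).2
      refine ⟨d.natAbs, Int.natAbs_pos.mpr hdet, ?_⟩
      have hna : (d.natAbs : ℤ) • y ∈ Λ := by
        rcases Int.natAbs_eq d with h | h
        · rwa [← h]
        · rw [← neg_neg ((d.natAbs : ℤ) • y), ← neg_smul, ← h]
          exact Λ.neg_mem hdy
      rw [natCast_zsmul] at hna
      have : (d.natAbs • (QuotientAddGroup.mk y : (Fin 2 → ℂ) ⧸ Λ)) =
          QuotientAddGroup.mk (d.natAbs • y) := by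
        exact (map_nsmul (QuotientAddGroup.mk' Λ) d.natAbs y).symm
      rw [this, QuotientAddGroup.eq_zero_iff]
      exact hna
    · -- torsion implies periodic
      rintro ⟨q, hq, hqy⟩
      haveI : NeZero q := ⟨by omega⟩
      have hqyΛ : q • y ∈ Λ := by
        rw [← QuotientAddGroup.eq_zero_iff]
        rw [← hqy]
        exact map_nsmul (QuotientAddGroup.mk' Λ) q y
      have hwmem : ∀ n : ℕ, q • ((f ^ n) y) ∈ Λℤ := by
        intro n
        have : q • ((f ^ n) y) = (f ^ n) (q • y) := (map_nsmul (f ^ n) q y).symm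
        have h5 : (f ^ n) (q • y) ∈ Λ := hLmem n _ hqyΛ
        rw [this]
        exact h5
      let w : ℕ → Λℤ := fun n => ⟨q • ((f ^ n) y), hwmem n⟩
      let g : ℕ → (Module.Free.ChooseBasisIndex ℤ Λℤ → ZMod q) :=
        fun n i => ((b.repr (w n) i : ℤ) : ZMod q)
      obtain ⟨k, k', hkk', hg⟩ := Finite.exists_ne_map_eq_of_infinite g
      -- from equality mod q, the iterates agree in the quotient
      have main : ∀ s t : ℕ, g s = g t → Lbar^[s] (QuotientAddGroup.mk y) =
          Lbar^[t] (QuotientAddGroup.mk y) := by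
        intro s t hst
        have hdvd : ∀ i, (q : ℤ) ∣ (b.repr (w s) i - b.repr (w t) i) := by
          intro i
          have : ((b.repr (w s) i - b.repr (w t) i : ℤ) : ZMod q) = 0 := by
            push_cast
            have := congrFun hst i
            simp only [g] at this
            rw [this]
            ring
          exact (ZMod.intCast_zmod_eq_zero_iff_dvd _ _).mp this
        choose e he using hdvd
        set u : Λℤ := ∑ i, e i • b i with hu
        have hru : ⇑(b.repr u) = e := b.repr_sum_self e
        have hqu : (q : ℤ) • u = w s - w t := by
          apply b.repr.injective
          ext i
          rw [map_zsmul, map_sub]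
          simp only [Finsupp.coe_smul, Finsupp.coe_sub, Pi.smul_apply, Pi.sub_apply]
          have : b.repr u i = e i := congrFun hru i
          rw [this, smul_eq_mul, ← he i]
        have hE : (q : ℤ) • (u : Fin 2 → ℂ) =
            q • ((f ^ s) y) - q • ((f ^ t) y) := by
          have := congrArg (Subtype.val) hqu
          simpa [w] using this
        have hsub : (f ^ s) y - (f ^ t) y = (u : Fin 2 → ℂ) := by
          have h6 : (q : ℂ) • ((f ^ s) y - (f ^ t) y - (u : Fin 2 → ℂ)) = 0 := by
            rw [smul_sub, smul_sub]
            rw [Nat.cast_smul_eq_nsmul ℂ q, Nat.cast_smul_eq_nsmul ℂ q,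
              Nat.cast_smul_eq_nsmul ℂ q]
            rw [natCast_zsmul] at hE
            rw [hE]
            abel
          have h7 : (q : ℂ) ≠ 0 := Nat.cast_ne_zero.mpr (NeZero.ne q)
          have := (smul_eq_zero.mp h6).resolve_left h7
          rwa [sub_eq_zero] at this
        rw [hiter, hiter, QuotientAddGroup.eq]
        have : -((f ^ s) y) + (f ^ t) y = -((u : Fin 2 → ℂ)) := by
          rw [← hsub]; abel
        rw [this]
        exact Λ.neg_mem u.2
      have hiterate_eq := main k k' hg
      rcases hkk'.lt_or_gt with hlt | hlt
      · refine ⟨k' - k, by omega, ?_⟩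
        have h8 : Lbar^[k] (Lbar^[k' - k] (QuotientAddGroup.mk y)) =
            Lbar^[k] (QuotientAddGroup.mk y) := by
          rw [← Function.iterate_add_apply, show k + (k' - k) = k' by omega]
          exact hiterate_eq.symm
        exact Function.Injective.iterate hinj k h8
      · refine ⟨k - k', by omega, ?_⟩
        have h8 : Lbar^[k'] (Lbar^[k - k'] (QuotientAddGroup.mk y)) =
            Lbar^[k'] (QuotientAddGroup.mk y) := by
          rw [← Function.iterate_add_apply, show k' + (k - k') = k by omega]
          exact hiterate_eq
        exact Function.Injective.iterate hinj k' h8
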